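/- Let D < 0 be a fundamental discriminant, k = ℚ(√D), and p an odd prime dividing D. Let 𝔞 be a nonzero fractional ideal of k and let λ, μ ∈ 𝔞 be nonzero elements such that the integers m = N(λ)/N(𝔞) and n = N(μ)/N(𝔞) are both coprime to D. Then the Legendre symbols of m and n modulo p agree: (m | p) = (n | p). (In other words, for each odd prime p ∣ D the genus character χ_{p*} takes a constant value on the numbers coprime to D represented by the quadratic form N(·)/N(𝔞) on 𝔞.) -/

import Mathlib

open NumberField
open scoped nonZeroDivisors
open Polynomial Matrix

-- charpoly of a 2x2 matrix
lemma my_charpoly_fin_two {R : Type*} [CommRing R] (M : Matrix (Fin 2) (Fin 2) R) :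
    M.charpoly = X ^ 2 - C (Matrix.trace M) * X + C M.det := by
  rw [Matrix.charpoly, Matrix.det_fin_two, Matrix.trace_fin_two, Matrix.det_fin_two]
  rw [Matrix.charmatrix_apply_eq, Matrix.charmatrix_apply_eq,
    Matrix.charmatrix_apply_ne _ _ _ (by decide : (0 : Fin 2) ≠ 1),
    Matrix.charmatrix_apply_ne _ _ _ (by decide : (1 : Fin 2) ≠ 0)]
  simp only [map_sub, _root_.map_mul, map_add]
  ring

-- quadratic identity in a degree-2 extension
lemma my_quad_id (k : Type) [Field k] [NumberField k] (hdeg : Module.finrank ℚ k = 2)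
    (x : k) :
    x ^ 2 - algebraMap ℚ k (Algebra.trace ℚ k x) * x + algebraMap ℚ k (Algebra.norm ℚ x) = 0 := by
  have card : Fintype.card (Module.Free.ChooseBasisIndex ℤ (NumberField.RingOfIntegers k)) = 2 := by
    rw [← hdeg, Module.finrank_eq_card_basis (NumberField.integralBasis k)]
  let e := Fintype.equivFinOfCardEq card
  let b : Module.Basis (Fin 2) ℚ k := (NumberField.integralBasis k).reindex e
  let M := Algebra.leftMulMatrix b x
  have htr : Algebra.trace ℚ k x = Matrix.trace M := Algebra.trace_eq_matrix_trace b x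
  have hdet : Algebra.norm ℚ x = M.det := Algebra.norm_eq_matrix_det b x
  have hCH := Matrix.aeval_self_charpoly M
  rw [my_charpoly_fin_two] at hCH
  have : Algebra.leftMulMatrix b
      (x ^ 2 - algebraMap ℚ k (Algebra.trace ℚ k x) * x + algebraMap ℚ k (Algebra.norm ℚ x)) = 0 := by
    rw [map_add, map_sub, _root_.map_mul, map_pow]
    have h1 : Algebra.leftMulMatrix b (algebraMap ℚ k (Algebra.trace ℚ k x))
        = Matrix.scalar (Fin 2) (Algebra.trace ℚ k x) := by
      rw [AlgHom.commutes]; rfl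
    have h2 : Algebra.leftMulMatrix b (algebraMap ℚ k (Algebra.norm ℚ x))
        = Matrix.scalar (Fin 2) (Algebra.norm ℚ x) := by
      rw [AlgHom.commutes]; rfl
    rw [h1, h2, htr, hdet]
    simpa [Polynomial.aeval_def, Polynomial.eval₂, Polynomial.eval₂_mul, Matrix.algebraMap_eq_diagonal, Pi.algebraMap_def] using hCH
  exact Algebra.leftMulMatrix_injective b (by rw [this, map_zero])


lemma my_rep_int (k : Type) [Field k] [NumberField k]
    (𝔞 : FractionalIdeal (𝓞 k)⁰ k) (h𝔞 : 𝔞 ≠ 0) {x : k} (hx : x ∈ 𝔞) :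
    ∃ r : ℤ, (r : ℚ) = Algebra.norm ℚ x / FractionalIdeal.absNorm 𝔞 := by
  have hc0 : FractionalIdeal.absNorm 𝔞 ≠ 0 := by
    simpa [FractionalIdeal.absNorm_eq_zero_iff] using h𝔞
  rcases eq_or_ne x 0 with rfl | hx0
  · exact ⟨0, by simp⟩
  · have hle : FractionalIdeal.spanSingleton (𝓞 k)⁰ x ≤ 𝔞 :=
      FractionalIdeal.spanSingleton_le_iff_mem.mpr hx
    have hJ : FractionalIdeal.spanSingleton (𝓞 k)⁰ x * 𝔞⁻¹ ≤ 1 := by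
      calc FractionalIdeal.spanSingleton (𝓞 k)⁰ x * 𝔞⁻¹ ≤ 𝔞 * 𝔞⁻¹ :=
            by gcongr
        _ = 1 := mul_inv_cancel₀ h𝔞
    obtain ⟨I, hI⟩ := FractionalIdeal.le_one_iff_exists_coeIdeal.mp hJ
    have habs : |Algebra.norm ℚ x| * (FractionalIdeal.absNorm 𝔞)⁻¹ = (Ideal.absNorm I : ℚ) := by
      rw [← FractionalIdeal.absNorm_span_singleton (𝓞 k), ← map_inv₀, ← _root_.map_mul, ← hI,
        FractionalIdeal.coeIdeal_absNorm]
    rcases le_or_gt 0 (Algebra.norm ℚ x) with h | h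
    · refine ⟨(Ideal.absNorm I : ℤ), ?_⟩
      rw [div_eq_mul_inv, ← abs_of_nonneg h, habs]; push_cast; ring
    · refine ⟨-(Ideal.absNorm I : ℤ), ?_⟩
      rw [div_eq_mul_inv, ← neg_neg (Algebra.norm ℚ x), ← abs_of_neg h, neg_mul, habs]
      push_cast; ring

/-- Let `D < 0` be a fundamental discriminant, `k = ℚ(√D)`, and `p` an odd
prime dividing `D`.  Let `𝔞` be a nonzero fractional ideal of `k` and `λ, μ ∈ 𝔞` nonzero
elements such that the integers `m = N(λ)/N(𝔞)` and `n = N(μ)/N(𝔞)` are coprime to `D`.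
Then the Legendre symbols of `m` and `n` modulo `p` agree: `(m | p) = (n | p)`. -/
theorem genus_character_constant_on_represented_numbers
    (D : ℤ) (hDneg : D < 0)
    (k : Type) [Field k] [NumberField k]
    (hdeg : Module.finrank ℚ k = 2) (hdisc : NumberField.discr k = D)
    (p : ℕ) [Fact p.Prime] (hpodd : p ≠ 2) (hpD : (p : ℤ) ∣ D)
    (𝔞 : FractionalIdeal (𝓞 k)⁰ k) (h𝔞 : 𝔞 ≠ 0)
    (lam mu : k) (hlam𝔞 : lam ∈ 𝔞) (hmu𝔞 : mu ∈ 𝔞) (hlam : lam ≠ 0) (hmu : mu ≠ 0)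
    (m n : ℤ)
    (hm : (m : ℚ) = Algebra.norm ℚ lam / FractionalIdeal.absNorm 𝔞)
    (hn : (n : ℚ) = Algebra.norm ℚ mu / FractionalIdeal.absNorm 𝔞)
    (hmD : IsCoprime m D) (hnD : IsCoprime n D) :
    legendreSym p m = legendreSym p n := by
  have hinj : Function.Injective (algebraMap ℚ k) := (algebraMap ℚ k).injective
  set c : ℚ := FractionalIdeal.absNorm 𝔞 with hcdef
  have hc0 : c ≠ 0 := by
    simpa [hcdef, FractionalIdeal.absNorm_eq_zero_iff] using h𝔞
  set T : k → ℚ := fun x => Algebra.trace ℚ k x with hTdef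
  set Nm : k → ℚ := fun x => Algebra.norm ℚ x with hNdef
  set conj : k → k := fun x => algebraMap ℚ k (T x) - x with hconjdef
  -- basic facts
  have hmulconj : ∀ x : k, x * conj x = algebraMap ℚ k (Nm x) := by
    intro x
    have := my_quad_id k hdeg x
    simp only [hconjdef, hTdef, hNdef]
    ring_nf
    ring_nf at this
    linear_combination -this
  have hTrat : ∀ q : ℚ, T (algebraMap ℚ k q) = 2 * q := by
    intro q
    simp only [hTdef, Algebra.trace_algebraMap, hdeg]
    norm_num
  have hTadd : ∀ x y : k, T (x + y) = T x + T y := fun x y => map_add _ x y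
  have hTconj : ∀ x : k, T (conj x) = T x := by
    intro x
    simp only [hconjdef]
    rw [show algebraMap ℚ k (T x) - x = algebraMap ℚ k (T x) + (-x) by ring, hTadd,
      hTrat]
    have : T (-x) = -T x := map_neg _ x
    rw [this]; ring
  have hconjconj : ∀ x : k, conj (conj x) = x := by
    intro x
    show algebraMap ℚ k (T (conj x)) - conj x = x
    simp only [hTconj]
    simp only [hconjdef]
    ring
  have hNconj : ∀ x : k, Nm (conj x) = Nm x := by
    intro x
    apply hinj
    rw [← hmulconj (conj x), hconjconj, ← hmulconj x]; ring
  have hNmul : ∀ x y : k, Nm (x * y) = Nm x * Nm y := by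
    intro x y; simp only [hNdef, _root_.map_mul]
  have hconj_mul : ∀ x y : k, x * y ≠ 0 → conj (x * y) = conj x * conj y := by
    intro x y hxy
    have h1 : (x * y) * conj (x * y) = (x * y) * (conj x * conj y) := by
      rw [hmulconj (x * y), hNmul, _root_.map_mul]
      rw [show x * y * (conj x * conj y) = (x * conj x) * (y * conj y) by ring,
        hmulconj, hmulconj]
    exact mul_left_cancel₀ hxy h1
  -- nonvanishing of m, n
  have hDnotunit : ¬ IsUnit D := by
    intro h
    rcases Int.isUnit_iff.mp h with h1 | h1 <;>
      · rw [h1] at hpD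
        have := Int.isUnit_iff.mp (isUnit_of_dvd_unit hpD (by simp [h1] <;> exact isUnit_one))
        have hp2 : (2 : ℕ) ≤ p := (Fact.out : p.Prime).two_le
        omega
  have hm0 : m ≠ 0 := by
    rintro rfl
    exact hDnotunit (isCoprime_zero_left.mp hmD)
  have hn0 : n ≠ 0 := by
    rintro rfl
    exact hDnotunit (isCoprime_zero_left.mp hnD)
  -- norms of lam and mu
  have hNlam : Nm lam = m * c := by
    field_simp [hNdef] at hm ⊢
    linarith [hm]
  have hNmu : Nm mu = n * c := by
    field_simp [hNdef] at hn ⊢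
    linarith [hn]
  have hconjmu : conj mu ≠ 0 := by
    intro h
    have := hmulconj mu
    rw [h, mul_zero] at this
    have : Nm mu = 0 := by
      apply hinj; rw [← this]; simp
    rw [hNmu] at this
    exact (mul_ne_zero (Int.cast_ne_zero.mpr hn0) hc0) this
  -- the integer s with N(lam+mu) = s c
  obtain ⟨s, hs⟩ := my_rep_int k 𝔞 h𝔞 (Submodule.add_mem _ hlam𝔞 hmu𝔞)
  have hNsum : Nm (lam + mu) = s * c := by
    rw [hs, ← hcdef]
    exact (div_mul_cancel₀ _ hc0).symm
  set t : ℤ := s - m - n with htdef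
  -- cross term
  have hw : lam * conj mu ≠ 0 := mul_ne_zero hlam hconjmu
  have hcross : T (lam * conj mu) = t * c := by
    have expand : algebraMap ℚ k (Nm (lam + mu))
        = algebraMap ℚ k (Nm lam) + algebraMap ℚ k (Nm mu)
          + algebraMap ℚ k (T (lam * conj mu)) := by
      have e1 : (lam + mu) * conj (lam + mu) = algebraMap ℚ k (Nm (lam + mu)) :=
        hmulconj _
      have e2 : conj (lam + mu) = conj lam + conj mu := by
        simp only [hconjdef, hTadd, map_add]; ring
      have e3 : mu * conj lam = conj (lam * conj mu) := by
        rw [hconj_mul lam (conj mu) hw, hconjconj]; ring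
      have e4 : lam * conj mu + conj (lam * conj mu) = algebraMap ℚ k (T (lam * conj mu)) := by
        simp only [hconjdef]; ring
      rw [← e1, e2]
      rw [show (lam + mu) * (conj lam + conj mu)
          = lam * conj lam + mu * conj mu + (lam * conj mu + mu * conj lam) by ring]
      rw [hmulconj, hmulconj, e3, e4]
    have := hinj (by
      rw [expand, ← map_add, ← map_add] : algebraMap ℚ k (Nm (lam+mu))
        = algebraMap ℚ k (Nm lam + Nm mu + T (lam * conj mu)))
    rw [hNsum, hNlam, hNmu] at this
    rw [htdef]
    push_cast
    linarith [this]
  -- define xi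
  set ξ : k := c⁻¹ • (lam * conj mu) with hξdef
  have hξ0 : ξ ≠ 0 := by
    simp only [hξdef, smul_ne_zero_iff]
    exact ⟨inv_ne_zero hc0, hw⟩
  have hTξ : T ξ = t := by
    have h1 : T ξ = c⁻¹ * T (lam * conj mu) := by
      simp only [hξdef, hTdef, _root_.map_smul, smul_eq_mul]
    rw [h1, hcross]
    field_simp
  have hNξ : Nm ξ = m * n := by
    have hsm : (lam * conj mu) = algebraMap ℚ k c * ξ := by
      rw [hξdef, Algebra.smul_def, ← mul_assoc, ← _root_.map_mul]
      field_simp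
      simp
    have : Nm (lam * conj mu) = (c * c) * Nm ξ := by
      rw [hsm, hNmul]
      have : Nm (algebraMap ℚ k c) = c ^ 2 := by
        simp only [hNdef]
        rw [Algebra.norm_algebraMap, hdeg]
      rw [this]; ring
    rw [hNmul, hNconj, hNlam, hNmu] at this
    have h3 : c * c * (Nm ξ - m * n) = 0 := by linear_combination -this
    rcases mul_eq_zero.mp h3 with h4 | h4
    · exact absurd h4 (mul_ne_zero hc0 hc0)
    · linarith [h4]
  -- quadratic relation for xi with integer coefficients
  have hquadξ : ξ ^ 2 - (t : k) * ξ + ((m * n : ℤ) : k) = 0 := by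
    have := my_quad_id k hdeg ξ
    rw [show (Algebra.trace ℚ k) ξ = T ξ from rfl, show (Algebra.norm ℚ) ξ = Nm ξ from rfl,
      hTξ, hNξ] at this
    rw [show ((m * n : ℤ) : k) = algebraMap ℚ k ((m : ℚ) * n) by push_cast; simp,
      show (t : k) = algebraMap ℚ k (t : ℚ) by simp]
    exact this
  have hint : IsIntegral ℤ ξ := by
    refine ⟨X ^ 2 - C t * X + C (m * n), ?_, ?_⟩
    · monicity!
    · simp only [eval₂_add, eval₂_sub, eval₂_mul, eval₂_pow, eval₂_X, eval₂_C]
      rw [show (algebraMap ℤ k) t = (t : k) by simp, show (algebraMap ℤ k) (m*n) = ((m*n : ℤ) : k) by simp]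
      exact hquadξ
  set ξO : 𝓞 k := ⟨ξ, hint⟩ with hξOdef
  have hξOcoe : algebraMap (𝓞 k) k ξO = ξ := rfl
  -- discriminant comparison
  have card : Fintype.card (Module.Free.ChooseBasisIndex ℤ (𝓞 k)) = 2 := by
    rw [← hdeg, Module.finrank_eq_card_basis (NumberField.integralBasis k)]
  let e := Fintype.equivFinOfCardEq card
  let bO : Module.Basis (Fin 2) ℤ (𝓞 k) := (RingOfIntegers.basis k).reindex e
  let bK : Module.Basis (Fin 2) ℚ k := (NumberField.integralBasis k).reindex e
  have hbK : ∀ i, bK i = algebraMap (𝓞 k) k (bO i) := by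
    intro i
    simp only [bK, bO, Module.Basis.coe_reindex, Function.comp_apply, NumberField.integralBasis_apply]
  have hDbK : Algebra.discr ℚ (⇑bK) = (D : ℚ) := by
    have h1 : Algebra.discr ℚ (⇑bK) = Algebra.discr ℚ (NumberField.integralBasis k) := by
      rw [show ⇑bK = (NumberField.integralBasis k) ∘ ⇑e.symm from Module.Basis.coe_reindex _ _]
      exact Algebra.discr_reindex ℚ (NumberField.integralBasis k) e
    rw [h1, ← NumberField.coe_discr, hdisc]
  -- the change-of-basis matrix
  set v : Fin 2 → 𝓞 k := ![1, ξO] with hvdef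
  set P₀ : Matrix (Fin 2) (Fin 2) ℤ := Matrix.of (fun i j => bO.repr (v j) i) with hP₀def
  have hvec : ![(1 : k), ξ] = (⇑bK) ᵥ* (P₀.map (Int.cast : ℤ → ℚ)).map (algebraMap ℚ k) := by
    funext j
    rw [Matrix.vecMul]
    simp only [Matrix.map_apply, dotProduct]
    have : ∀ i : Fin 2, bK i * (algebraMap ℚ k) ((P₀ i j : ℤ) : ℚ)
        = algebraMap (𝓞 k) k ((bO.repr (v j) i) • bO i) := by
      intro i
      rw [hbK i, map_zsmul, zsmul_eq_mul, hP₀def]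
      simp [Matrix.of_apply, map_intCast]
      ring
    simp only [this]
    rw [← map_sum, Module.Basis.sum_repr]
    fin_cases j <;> simp [hvdef, hξOcoe]
  have hdiscr_eq : Algebra.discr ℚ ![(1:k), ξ] = ((P₀.det : ℚ)) ^ 2 * (D : ℚ) := by
    rw [hvec, Algebra.discr_of_matrix_vecMul, hDbK]
    congr 1
    have hd : ((P₀.det : ℤ) : ℚ) = (P₀.map (Int.cast : ℤ → ℚ)).det := by
      simpa [RingHom.mapMatrix_apply] using RingHom.map_det (Int.castRingHom ℚ) P₀
    rw [← hd]
  have h1T : T 1 = 2 := by simpa using hTrat 1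
  have hsq : ξ * ξ = algebraMap ℚ k ((t : ℤ) : ℚ) * ξ - algebraMap ℚ k ((m * n : ℤ) : ℚ) := by
    have h := hquadξ
    rw [show ((t : ℤ) : k) = algebraMap ℚ k ((t : ℤ) : ℚ) by simp,
      show ((m * n : ℤ) : k) = algebraMap ℚ k ((m * n : ℤ) : ℚ) by simp] at h
    linear_combination h
  have h3T : T (ξ * ξ) = (t : ℚ) ^ 2 - 2 * ((m : ℚ) * n) := by
    have e0 : ξ * ξ = ((t : ℤ) : ℚ) • ξ - algebraMap ℚ k ((m * n : ℤ) : ℚ) := by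
      rw [Algebra.smul_def]; exact hsq
    calc T (ξ * ξ) = T (((t : ℤ) : ℚ) • ξ - algebraMap ℚ k ((m * n : ℤ) : ℚ)) := by rw [e0]
      _ = ((t : ℤ) : ℚ) * T ξ - T (algebraMap ℚ k ((m * n : ℤ) : ℚ)) := by
          simp only [hTdef, map_sub, _root_.map_smul, smul_eq_mul]
      _ = ((t : ℤ) : ℚ) * ((t : ℤ) : ℚ) - 2 * ((m * n : ℤ) : ℚ) := by
          rw [hTξ, hTrat]
      _ = (t : ℚ) ^ 2 - 2 * ((m : ℚ) * n) := by push_cast; ring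
  have hdiscr_val : Algebra.discr ℚ ![(1:k), ξ] = (t : ℚ) ^ 2 - 4 * ((m : ℚ) * n) := by
    rw [Algebra.discr_def, Matrix.det_fin_two]
    simp only [Algebra.traceMatrix_apply, Algebra.traceForm_apply, Matrix.cons_val_zero,
      Matrix.cons_val_one, Matrix.head_cons, mul_one, one_mul]
    rw [show ((Algebra.trace ℚ k) (1:k)) = T 1 from rfl,
      show ((Algebra.trace ℚ k) (ξ * ξ)) = T (ξ * ξ) from rfl,
      show ((Algebra.trace ℚ k) ξ) = T ξ from rfl,
      h3T, hTξ, h1T]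
    push_cast; ring
  have hZ : t ^ 2 - 4 * (m * n) = P₀.det ^ 2 * D := by
    have h5 := hdiscr_val.symm.trans hdiscr_eq
    exact_mod_cast h5
  -- p divides t^2 - 4mn
  have hpdvd : (p : ℤ) ∣ t ^ 2 - 4 * (m * n) := hZ ▸ Dvd.dvd.mul_left hpD _
  -- p does not divide m, n
  have hpunit : ¬ IsUnit (p : ℤ) := by
    rw [Int.isUnit_iff]
    have hp2 : (2 : ℕ) ≤ p := (Fact.out : p.Prime).two_le
    omega
  have hpm : ¬ (p : ℤ) ∣ m := fun h =>
    hpunit ((hmD.of_isCoprime_of_dvd_right hpD).isUnit_of_dvd' h (dvd_refl _))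
  have hpn : ¬ (p : ℤ) ∣ n := fun h =>
    hpunit ((hnD.of_isCoprime_of_dvd_right hpD).isUnit_of_dvd' h (dvd_refl _))
  have hp_prime : Prime (p : ℤ) := Int.prime_iff_natAbs_prime.mpr (by simpa using (Fact.out : p.Prime))
  have hp2 : ¬ (p : ℤ) ∣ 2 := by
    intro h
    have h2 : p ∣ 2 := by exact_mod_cast h
    exact hpodd ((Nat.prime_dvd_prime_iff_eq (Fact.out : p.Prime) Nat.prime_two).mp h2)
  have hpt : ¬ (p : ℤ) ∣ t := by
    intro h
    have h4 : (p : ℤ) ∣ 4 * (m * n) := by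
      have h5 : (p : ℤ) ∣ t ^ 2 - (t ^ 2 - 4 * (m * n)) :=
        dvd_sub (dvd_pow h two_ne_zero) hpdvd
      convert h5 using 1; ring
    rcases hp_prime.dvd_mul.mp h4 with h5 | h5
    · have : (p : ℤ) ∣ 2 := by
        rcases (hp_prime.dvd_mul.mp (show (p:ℤ) ∣ 2 * 2 by norm_num at h5 ⊢; exact h5)) with h6 | h6 <;> exact h6
      exact hp2 this
    · rcases hp_prime.dvd_mul.mp h5 with h6 | h6
      · exact hpm h6
      · exact hpn h6
  -- Legendre symbol computation
  have hcast : ((t ^ 2 : ℤ) : ZMod p) = ((4 * (m * n) : ℤ) : ZMod p) := by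
    have : ((t ^ 2 - 4 * (m * n) : ℤ) : ZMod p) = 0 :=
      (ZMod.intCast_zmod_eq_zero_iff_dvd _ p).mpr hpdvd
    push_cast at this ⊢
    linear_combination this
  have hL1 : legendreSym p (t ^ 2) = 1 :=
    legendreSym.sq_one' (p := p) (fun h => hpt ((ZMod.intCast_zmod_eq_zero_iff_dvd _ p).mp h))
  have hLeq : legendreSym p (t ^ 2) = legendreSym p (4 * (m * n)) := by
    unfold legendreSym
    rw [hcast]
  have hL4 : legendreSym p 4 = 1 := by
    have : legendreSym p ((2 : ℤ) ^ 2) = 1 :=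
      legendreSym.sq_one' (p := p) (fun h => hp2 ((ZMod.intCast_zmod_eq_zero_iff_dvd _ p).mp h))
    simpa using this
  have hmul : legendreSym p m * legendreSym p n = 1 := by
    have h6 : legendreSym p (4 * (m * n)) = legendreSym p 4 * (legendreSym p m * legendreSym p n) := by
      rw [legendreSym.mul, legendreSym.mul]
    rw [h6, hL4, one_mul] at hLeq
    rw [← hLeq, hL1]
  have hsqm : legendreSym p m ^ 2 = 1 :=
    legendreSym.sq_one (p := p) (fun h => hpm ((ZMod.intCast_zmod_eq_zero_iff_dvd _ p).mp h))
  linear_combination (legendreSym p n) * hsqm - (legendreSym p m) * hmul
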